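/- Let n ≥ 3 be odd and let k be a field of characteristic zero. In sl_n, let E₁ = ∑_{j=1}^{n-2} ⌊(j+1)/2⌋ e_{j,j+2} and E₂ = e_{n,n-1} + e_{n-2,n-3} + ⋯ + e_{3,2}. Then [E₁,E₂] ≠ 0 and [[E₁,E₂],E₁] = [[E₁,E₂],E₂] = 0, so the Lie subalgebra of sl_n generated by E₁ and E₂ is a Heisenberg Lie algebra. -/

import Mathlib

open Matrix

lemma sumA' {n : ℕ} {M : Type*} [AddCommMonoid M] (m : ℕ) (g : Fin n → M) :
    ∑ c : Fin n, (if (c : ℕ) = m then g c else 0) =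
    if h : m < n then g ⟨m, h⟩ else 0 := by
  split_ifs with h
  · rw [Finset.sum_eq_single (⟨m, h⟩ : Fin n)]
    · simp
    · intro c _ hc
      exact if_neg fun hcm => hc (Fin.ext hcm)
    · simp
  · exact Finset.sum_eq_zero fun c _ => if_neg (by have := c.isLt; omega)

lemma sumB' {n : ℕ} {M : Type*} [AddCommMonoid M] (m j : ℕ) (g : Fin n → M) :
    ∑ c : Fin n, (if m = (c : ℕ) + j then g c else 0) =
    if h : m - j < n ∧ j ≤ m then g ⟨m - j, h.1⟩ else 0 := by
  split_ifs with h
  · rw [Finset.sum_eq_single (⟨m - j, h.1⟩ : Fin n)]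
    · rw [if_pos (by simp; omega)]
    · intro c _ hc
      refine if_neg fun hcm => hc (Fin.ext ?_)
      simp; omega
    · simp
  · refine Finset.sum_eq_zero fun c _ => if_neg ?_
    have := c.isLt; omega

/-- Let n ≥ 3 be odd, k a field of characteristic zero. In sl_n let
E₁ = ∑_{j=1}^{n-2} ⌊(j+1)/2⌋ e_{j,j+2} and E₂ = e_{n,n-1} + e_{n-2,n-3} + ⋯ + e_{3,2}
(indices 1-based; below matrices are 0-indexed by `Fin n`, so E₁ has entry
⌊(a+2)/2⌋ at (a, a+2) and E₂ has entry 1 at (a, a-1) for even a ≥ 2).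
Then [E₁,E₂] ≠ 0 and [[E₁,E₂],E₁] = [[E₁,E₂],E₂] = 0, so the Lie subalgebra of
sl_n generated by E₁ and E₂ is a Heisenberg Lie algebra. -/
theorem stmt_9 (k : Type*) [Field k] [CharZero k] (n : ℕ) (hn : 3 ≤ n)
    (hodd : Odd n)
    (E₁ E₂ : Matrix (Fin n) (Fin n) k)
    (hE₁ : E₁ = Matrix.of fun a b : Fin n =>
      if (b : ℕ) = (a : ℕ) + 2 then ((((a : ℕ) + 2) / 2 : ℕ) : k) else 0)
    (hE₂ : E₂ = Matrix.of fun a b : Fin n =>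
      if (a : ℕ) = (b : ℕ) + 1 ∧ Even (a : ℕ) ∧ 2 ≤ (a : ℕ) then (1 : k) else 0) :
    E₁ * E₂ - E₂ * E₁ ≠ 0 ∧
    (E₁ * E₂ - E₂ * E₁) * E₁ - E₁ * (E₁ * E₂ - E₂ * E₁) = 0 ∧
    (E₁ * E₂ - E₂ * E₁) * E₂ - E₂ * (E₁ * E₂ - E₂ * E₁) = 0 := by
  have hodd' : n % 2 = 1 := Nat.odd_iff.mp hodd
  have hC : E₁ * E₂ - E₂ * E₁ = Matrix.of fun a b : Fin n =>
      if (b : ℕ) = (a : ℕ) + 1 ∧ (a : ℕ) % 2 = 0 then (1 : k) else 0 := by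
    ext a b
    have ha := a.isLt
    have hb := b.isLt
    simp only [hE₁, hE₂, Matrix.sub_apply, mul_apply, of_apply, Nat.even_iff, ite_and, ite_mul,
      mul_ite, zero_mul, mul_zero, mul_one, one_mul]
    rw [sumA', sumB']
    simp only [Fin.val_mk]
    split_ifs <;> push_cast <;> try omega
    all_goals try ring
    all_goals try (rw [show (2 + (a : ℕ)) / 2 = (2 + ((b : ℕ) - 2)) / 2 + 1 from by omega] <;> push_cast <;> ring)
    all_goals try (rw [show (2 + (a : ℕ)) / 2 = 1 from by omega]; norm_num)
  refine ⟨?_, ?_, ?_⟩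
  · rw [hC]
    intro h
    have h01 := congrFun (congrFun h ⟨0, by omega⟩) ⟨1, by omega⟩
    simp only [of_apply, Matrix.zero_apply] at h01
    norm_num at h01
  · rw [hC, hE₁]
    ext a b
    have ha := a.isLt
    have hb := b.isLt
    simp only [Matrix.sub_apply, mul_apply, of_apply, ite_and, ite_mul,
      mul_ite, zero_mul, mul_zero, mul_one, one_mul, Matrix.zero_apply]
    rw [sumB', sumB']
    simp only [Fin.val_mk]
    split_ifs <;> push_cast <;> try omega
    all_goals try ring
    all_goals try (rw [show (2 + ((b : ℕ) - 2)) / 2 = (2 + (a : ℕ)) / 2 from by omega] <;> ring)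
  · rw [hC, hE₂]
    ext a b
    have ha := a.isLt
    have hb := b.isLt
    simp only [Matrix.sub_apply, mul_apply, of_apply, Nat.even_iff, ite_and, ite_mul,
      mul_ite, zero_mul, mul_zero, mul_one, one_mul, Matrix.zero_apply]
    rw [sumA', sumB']
    simp only [Fin.val_mk]
    split_ifs <;> try omega
    all_goals ring
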